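/- Consider the time-varying system x_t = A_{t-1} x_{t-1} + B_{t-1} u_{t-1} + w_{t-1}, y_t = x_t + v_t, with controller internal state δ̂_t = y_t − Σ_{k=1}^{T-1} R_t(k+1) δ̂_{t-k} and input u_t = Σ_{k=0}^{T-1} M_t(k+1) δ̂_{t-k} (with δ̂_s = 0 for s < 0). Define Δ_k(A,B,R,M) = R(k+1) − A R(k) − B M(k) for 1 ≤ k ≤ T−1 and Δ_T(A,B,R,M) = −A R(T) − B M(T), with R_t(1) = I. Then the internal state satisfies the recursion δ̂_t = −Σ_{k=1}^{T} Δ_k(A_{t-1}, B_{t-1}, R_{t-1}, M_{t-1}) δ̂_{t-k} + Σ_{k=1}^{T-1} (R_{t-1} − R_t)(k+1) δ̂_{t-k} + (v_t − A_{t-1} v_{t-1}) + w_{t-1}. -/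

import Mathlib

open scoped Matrix

private lemma mulVec_sum' {n : ℕ} (A : Matrix (Fin n) (Fin n) ℝ) (s : Finset ℕ)
    (f : ℕ → Fin n → ℝ) :
    A.mulVec (∑ k ∈ s, f k) = ∑ k ∈ s, A.mulVec (f k) := by
  rw [← Matrix.mulVecLin_apply, map_sum]; simp only [Matrix.mulVecLin_apply]

private lemma shift_sum {α : Type*} [AddCommMonoid α] (S : ℕ) (f : ℕ → α) :
    ∑ k ∈ Finset.Icc 1 (S + 1), f k = ∑ k ∈ Finset.Icc 0 S, f (k + 1) := by
  rw [show Finset.Icc 1 (S+1) = Finset.Icc (1+0) (1+S) by ring_nf,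
    ← Finset.map_add_left_Icc, Finset.sum_map]
  exact Finset.sum_congr rfl (by intro x _; simp [addLeftEmbedding_apply, add_comm])

theorem stmt_9 (n T : ℕ) (hT : 1 ≤ T)
    (A B : ℤ → Matrix (Fin n) (Fin n) ℝ)
    (R M : ℤ → ℕ → Matrix (Fin n) (Fin n) ℝ)
    (x y u w v δ : ℤ → (Fin n → ℝ))
    (hδneg : ∀ t : ℤ, t < 0 → δ t = 0)
    (hR1 : ∀ t : ℤ, R t 1 = 1)
    (hRT1 : ∀ t : ℤ, R t (T + 1) = 0)  -- convention Δ_T = -A R(T) - B M(T)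
    (hdyn : ∀ t : ℤ, x t = (A (t - 1)).mulVec (x (t - 1))
      + (B (t - 1)).mulVec (u (t - 1)) + w (t - 1))
    (hy : ∀ t : ℤ, y t = x t + v t)
    (hδ : ∀ t : ℤ, 0 ≤ t → δ t =
      y t - ∑ k ∈ Finset.Icc 1 (T - 1), (R t (k + 1)).mulVec (δ (t - (k : ℤ))))
    (hu : ∀ t : ℤ, 0 ≤ t → u t =
      ∑ k ∈ Finset.Icc 0 (T - 1), (M t (k + 1)).mulVec (δ (t - (k : ℤ)))) :
    ∀ t : ℤ, 1 ≤ t → δ t =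
      -(∑ k ∈ Finset.Icc 1 T,
          (R (t - 1) (k + 1) - A (t - 1) * R (t - 1) k
            - B (t - 1) * M (t - 1) k).mulVec (δ (t - (k : ℤ))))
      + (∑ k ∈ Finset.Icc 1 (T - 1),
          (R (t - 1) (k + 1) - R t (k + 1)).mulVec (δ (t - (k : ℤ))))
      + (v t - (A (t - 1)).mulVec (v (t - 1))) + w (t - 1) := by
  obtain ⟨S, rfl⟩ : ∃ S, T = S + 1 := ⟨T - 1, by omega⟩
  simp only [Nat.add_sub_cancel] at *
  intro t ht
  have ht0 : (0:ℤ) ≤ t := by omega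
  have ht1 : (0:ℤ) ≤ t - 1 := by omega
  -- x (t-1) in terms of δ
  have hIcc : Finset.Icc 0 S = insert 0 (Finset.Icc 1 S) := by
    ext k; simp; omega
  have hx1 : x (t-1)
      = (∑ k ∈ Finset.Icc 0 S, (R (t-1) (k+1)).mulVec (δ (t-1-(k:ℤ)))) - v (t-1) := by
    have h1 := hy (t-1)
    have h2 := hδ (t-1) ht1
    rw [hIcc, Finset.sum_insert (by simp)]
    simp only [Nat.cast_zero, sub_zero, zero_add, hR1, Matrix.one_mulVec]
    rw [h1] at h2
    rw [h2]; abel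
  have key := hδ t ht0
  rw [hy t, hdyn t, hx1, hu (t-1) ht1] at key
  rw [key]
  -- expand linearity
  rw [Matrix.mulVec_sub, mulVec_sum', mulVec_sum']
  -- rewrite A.mulVec (R.mulVec _) as (A*R).mulVec _
  simp only [Matrix.mulVec_mulVec]
  -- RHS: expand the difference matrices
  simp only [Matrix.sub_mulVec, Finset.sum_sub_distrib]
  -- split the R-sum over Icc 1 (S+1) and kill the top term via hRT1
  rw [Finset.sum_Icc_succ_top (show 1 ≤ S + 1 by omega)
        (fun k => (R (t-1) (k+1)).mulVec (δ (t - (k:ℤ)))),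
      hRT1 (t-1), Matrix.zero_mulVec]
  -- reindex the LHS sums from Icc 0 S to Icc 1 (S+1)
  have hA : ∑ k ∈ Finset.Icc 0 S, (A (t-1) * R (t-1) (k+1)).mulVec (δ (t - 1 - (k:ℤ)))
      = ∑ k ∈ Finset.Icc 1 (S+1), (A (t-1) * R (t-1) k).mulVec (δ (t - (k:ℤ))) := by
    rw [shift_sum S (fun k => (A (t-1) * R (t-1) k).mulVec (δ (t - (k:ℤ))))]
    refine Finset.sum_congr rfl ?_
    intro k _; congr 1; push_cast; ring
  have hB : ∑ k ∈ Finset.Icc 0 S, (B (t-1) * M (t-1) (k+1)).mulVec (δ (t - 1 - (k:ℤ)))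
      = ∑ k ∈ Finset.Icc 1 (S+1), (B (t-1) * M (t-1) k).mulVec (δ (t - (k:ℤ))) := by
    rw [shift_sum S (fun k => (B (t-1) * M (t-1) k).mulVec (δ (t - (k:ℤ))))]
    refine Finset.sum_congr rfl ?_
    intro k _; congr 1; push_cast; ring
  rw [hA, hB]
  abel
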